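/- Let n, R ∈ ℕ with R ≤ n, and let A ⊆ B_n(R) be nonempty. Set ε := R/(2n), r₀ := min{ r ≤ R : |B_n(r)| ≥ ε|A| }, c := 1 − 1/(|B_n(R)|/|A| − ε), and for 0 ≤ r ≤ R let α_r := |A ∩ S_n(r)| / C(n,r). If c > 0 and 1 ≤ r₀ ≤ R − 1, then at least one of the following holds: (i) Σ_{r=r₀}^{R−1} |α_r − α_{r+1}| ≥ 4c/7, or (ii) α_r ≤ 1 − 3c/7 for every r with r₀ ≤ r ≤ R − 1. -/

import Mathlib

open Finset

/-- the family of subsets of `{1,…,n}` of size exactly `r` -/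
def sphere (n r : ℕ) : Finset (Finset (Fin n)) :=
  Finset.univ.filter (fun X => X.card = r)

/-- the family of subsets of `{1,…,n}` of size at most `R` -/
def hamBall (n R : ℕ) : Finset (Finset (Fin n)) :=
  Finset.univ.filter (fun X => X.card ≤ R)

/-- vertex boundary of `A` in the Hamming ball graph `B_n(R)`: vertices of the ball, not in
`A`, adjacent (symmetric difference of size one) to a member of `A` -/
def ballBoundary (n R : ℕ) (A : Finset (Finset (Fin n))) : Finset (Finset (Fin n)) :=
  (hamBall n R).filter (fun Y => Y ∉ A ∧ ∃ X ∈ A, (symmDiff X Y).card = 1)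

/-- With `ε := R/(2n)`, `r₀ := min{r ≤ R : |B_n(r)| ≥ ε|A|}`,
`c := 1 − 1/(|B_n(R)|/|A| − ε)` and `α_r := |A ∩ S_n(r)|/C(n,r)`, if `c > 0` and
`1 ≤ r₀ ≤ R − 1`, then either `Σ_{r=r₀}^{R−1} |α_r − α_{r+1}| ≥ 4c/7`, or
`α_r ≤ 1 − 3c/7` for all `r₀ ≤ r ≤ R − 1`. -/
lemma sphere_card (n r : ℕ) : (sphere n r).card = n.choose r := by
  have : sphere n r = Finset.powersetCard r (Finset.univ : Finset (Fin n)) := by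
    ext X; simp [sphere, Finset.mem_powersetCard]
  rw [this, Finset.card_powersetCard, Finset.card_univ, Fintype.card_fin]

lemma sphere_disj (n : ℕ) {r s : ℕ} (h : r ≠ s) : Disjoint (sphere n r) (sphere n s) := by
  rw [Finset.disjoint_left]
  intro X hX hX'
  simp [sphere] at hX hX'
  exact h (hX ▸ hX')

lemma hamBall_eq (n R : ℕ) : hamBall n R = (Finset.range (R+1)).biUnion (sphere n) := by
  ext X
  simp only [hamBall, sphere, Finset.mem_filter, Finset.mem_univ, true_and,
    Finset.mem_biUnion, Finset.mem_range, Nat.lt_succ_iff]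
  exact ⟨fun h => ⟨X.card, h, rfl⟩, fun ⟨a, ha, he⟩ => he ▸ ha⟩

lemma hamBall_card (n R : ℕ) : (hamBall n R).card = ∑ r ∈ Finset.range (R+1), n.choose r := by
  rw [hamBall_eq, Finset.card_biUnion]
  · simp [sphere_card]
  · exact fun x _ y _ hxy => sphere_disj n hxy

lemma tv_bound (α : ℕ → ℝ) (r₀ R a b : ℕ) (h1 : r₀ ≤ a) (h2 : a ≤ b) (h3 : b ≤ R) :
    |α a - α b| ≤ ∑ r ∈ Finset.Ico r₀ R, |α r - α (r + 1)| := by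
  have key : ∑ r ∈ Finset.Ico a b, (α r - α (r + 1)) = α a - α b := by
    rw [Finset.sum_Ico_eq_sub _ h2, Finset.sum_range_sub' α, Finset.sum_range_sub' α]
    ring
  calc |α a - α b| = |∑ r ∈ Finset.Ico a b, (α r - α (r + 1))| := by rw [key]
    _ ≤ ∑ r ∈ Finset.Ico a b, |α r - α (r + 1)| := Finset.abs_sum_le_sum_abs _ _
    _ ≤ ∑ r ∈ Finset.Ico r₀ R, |α r - α (r + 1)| := by
        apply Finset.sum_le_sum_of_subset_of_nonneg (Finset.Ico_subset_Ico h1 h3)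
        intros; positivity

theorem density_dichotomy (n R : ℕ) (hRn : R ≤ n)
    (A : Finset (Finset (Fin n))) (hA : A ⊆ hamBall n R) (hAne : A.Nonempty)
    (ε : ℝ) (hε : ε = (R : ℝ) / (2 * n))
    (r₀ : ℕ) (hr₀R : r₀ ≤ R)
    (hr₀ge : ε * A.card ≤ ((hamBall n r₀).card : ℝ))
    (hr₀min : ∀ r : ℕ, r < r₀ → ((hamBall n r).card : ℝ) < ε * A.card)
    (c : ℝ) (hc : c = 1 - 1 / (((hamBall n R).card : ℝ) / A.card - ε))
    (hcpos : 0 < c) (hr₀1 : 1 ≤ r₀) (hr₀R1 : r₀ ≤ R - 1)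
    (α : ℕ → ℝ) (hα : ∀ r : ℕ, r ≤ R → α r = ((A ∩ sphere n r).card : ℝ) / (n.choose r)) :
    (∑ r ∈ Finset.Ico r₀ R, |α r - α (r + 1)| ≥ 4 * c / 7) ∨
    (∀ r : ℕ, r₀ ≤ r → r ≤ R - 1 → α r ≤ 1 - 3 * c / 7) := by
  by_cases hall : ∀ r : ℕ, r₀ ≤ r → r ≤ R - 1 → α r ≤ 1 - 3 * c / 7
  · exact Or.inr hall
  left
  push_neg at hall
  obtain ⟨a, har₀, haR1, ha⟩ := hall
  have hR1 : 1 ≤ R := le_trans hr₀1 hr₀R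
  have haR : a ≤ R := by omega
  have hApos : (0:ℝ) < A.card := by exact_mod_cast Finset.card_pos.mpr hAne
  have hAB : (A.card : ℝ) ≤ ((hamBall n R).card : ℝ) := by
    exact_mod_cast Finset.card_le_card hA
  have hεhalf : ε ≤ 1/2 := by
    rcases Nat.eq_zero_or_pos n with h | h
    · subst h
      have hR0 : R = 0 := Nat.le_zero.mp hRn
      subst hR0
      rw [hε]; norm_num
    · rw [hε]
      have h2n : (0:ℝ) < 2 * n := by positivity
      rw [div_le_iff₀ h2n]
      have : (R:ℝ) ≤ n := by exact_mod_cast hRn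
      linarith
  set x : ℝ := ((hamBall n R).card : ℝ) / A.card - ε with hx
  have hxhalf : (1:ℝ)/2 ≤ x := by
    have : (1:ℝ) ≤ ((hamBall n R).card : ℝ) / A.card := (one_le_div hApos).mpr hAB
    rw [hx]; linarith
  have hxpos : 0 < x := lt_of_lt_of_le (by norm_num) hxhalf
  have hx1 : 1 < x := by
    have : 1 / x < 1 := by rw [hc] at hcpos; linarith
    rw [div_lt_one hxpos] at this; exact this
  have h1c : 1 - c = 1 / x := by rw [hc]; ring
  have h1cpos : 0 < 1 - c := by rw [h1c]; positivity
  -- existence of b with α b ≤ 1 - c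
  have hex : ∃ b ∈ Finset.Icc r₀ R, α b ≤ 1 - c := by
    by_contra hno
    push_neg at hno
    -- hno : ∀ b ∈ Icc r₀ R, 1 - c < α b
    have halpha : ∀ r ∈ Finset.Icc r₀ R, ((A ∩ sphere n r).card : ℝ) = α r * (n.choose r) := by
      intro r hr
      rw [Finset.mem_Icc] at hr
      have hrn : r ≤ n := le_trans hr.2 hRn
      have hch : (0:ℝ) < (n.choose r : ℝ) := by exact_mod_cast Nat.choose_pos hrn
      rw [hα r hr.2, div_mul_cancel₀]
      exact ne_of_gt hch
    -- sum of intersection cards ≤ |A|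
    have hsum_le : (∑ r ∈ Finset.Icc r₀ R, ((A ∩ sphere n r).card : ℝ)) ≤ (A.card : ℝ) := by
      have : ∑ r ∈ Finset.Icc r₀ R, (A ∩ sphere n r).card
          = ((Finset.Icc r₀ R).biUnion (fun r => A ∩ sphere n r)).card := by
        rw [Finset.card_biUnion]
        intro p _ q _ hpq
        exact Finset.disjoint_of_subset_left (Finset.inter_subset_right)
          (Finset.disjoint_of_subset_right (Finset.inter_subset_right) (sphere_disj n hpq))
      have hsub : (Finset.Icc r₀ R).biUnion (fun r => A ∩ sphere n r) ⊆ A := by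
        intro X hX
        simp only [Finset.mem_biUnion] at hX
        obtain ⟨r, _, hXr⟩ := hX
        exact (Finset.mem_inter.mp hXr).1
      calc (∑ r ∈ Finset.Icc r₀ R, ((A ∩ sphere n r).card : ℝ))
          = (((Finset.Icc r₀ R).biUnion (fun r => A ∩ sphere n r)).card : ℝ) := by
            exact_mod_cast this
        _ ≤ (A.card : ℝ) := by exact_mod_cast Finset.card_le_card hsub
    -- strict lower bound
    have hstrict : (1 - c) * (∑ r ∈ Finset.Icc r₀ R, (n.choose r : ℝ))
        < ∑ r ∈ Finset.Icc r₀ R, ((A ∩ sphere n r).card : ℝ) := by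
      rw [Finset.mul_sum]
      apply Finset.sum_lt_sum_of_nonempty
      · exact Finset.nonempty_Icc.mpr hr₀R
      · intro r hr
        rw [halpha r hr]
        have hrn : r ≤ n := le_trans (Finset.mem_Icc.mp hr).2 hRn
        have hch : (0:ℝ) < (n.choose r : ℝ) := by exact_mod_cast Nat.choose_pos hrn
        exact mul_lt_mul_of_pos_right (hno r hr) hch
    -- sum of choose over Icc
    have hball_split : ((hamBall n R).card : ℝ)
        = ((hamBall n (r₀ - 1)).card : ℝ) + ∑ r ∈ Finset.Icc r₀ R, (n.choose r : ℝ) := by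
      have e1 : (hamBall n R).card = ∑ r ∈ Finset.range (R+1), n.choose r := hamBall_card n R
      have e2 : (hamBall n (r₀-1)).card = ∑ r ∈ Finset.range r₀, n.choose r := by
        rw [hamBall_card]
        have h : r₀ - 1 + 1 = r₀ := by omega
        rw [h]
      have e3 : Finset.Icc r₀ R = Finset.Ico r₀ (R+1) := by rw [Finset.Ico_add_one_right_eq_Icc]
      have e4 : ∑ r ∈ Finset.range (R+1), n.choose r
          = ∑ r ∈ Finset.range r₀, n.choose r + ∑ r ∈ Finset.Ico r₀ (R+1), n.choose r := by
        rw [Finset.range_eq_Ico, Finset.range_eq_Ico,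
          Finset.sum_Ico_consecutive _ (Nat.zero_le r₀) (by omega : r₀ ≤ R + 1)]
      rw [e1, e2, e3, e4]
      push_cast
      ring
    have hsmall : ((hamBall n (r₀ - 1)).card : ℝ) < ε * A.card :=
      hr₀min (r₀ - 1) (by omega)
    -- combine
    have hxA : ((hamBall n R).card : ℝ) - ε * A.card = x * A.card := by
      rw [hx]; field_simp
    have hfin : (A.card : ℝ) < A.card := by
      have step1 : (1 - c) * (((hamBall n R).card : ℝ) - ε * A.card)
          ≤ (1 - c) * (∑ r ∈ Finset.Icc r₀ R, (n.choose r : ℝ)) := by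
        apply mul_le_mul_of_nonneg_left _ (le_of_lt h1cpos)
        linarith [hball_split, hsmall]
      have step2 : (1 - c) * (((hamBall n R).card : ℝ) - ε * A.card) = A.card := by
        rw [hxA, h1c, one_div, inv_mul_cancel_left₀ (ne_of_gt hxpos)]
      linarith
    exact absurd hfin (lt_irrefl _)
  obtain ⟨b, hb, hαb⟩ := hex
  rw [Finset.mem_Icc] at hb
  have hbound : |α a - α b| ≤ ∑ r ∈ Finset.Ico r₀ R, |α r - α (r + 1)| := by
    rcases le_total a b with hab | hba
    · exact tv_bound α r₀ R a b har₀ hab hb.2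
    · rw [abs_sub_comm]
      exact tv_bound α r₀ R b a hb.1 hba haR
  have : α a - α b ≤ |α a - α b| := le_abs_self _
  have : 4 * c / 7 ≤ α a - α b := by linarith
  linarith [le_abs_self (α a - α b)]
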